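/- Let A be a PP-rich subset of (ℕ,+). Then: (1) there is a family ⟨B_α⟩_{α < 2^{ℵ₀}} of 2^{ℵ₀} subsets of A such that each B_α is an infinite PP-rich set and B_α ∩ B_β is finite whenever α ≠ β; and (2) A can be partitioned into countably infinitely many pairwise disjoint sets, each of which is PP-rich. -/

import Mathlib

open scoped Classical


/- Here the positive integers are encoded inside Lean's `ℕ` via positivity conditions.
`ℙ_ℕ` is encoded as the set of `p : Polynomial ℕ` with `p ≠ 0` and `p.coeff 0 = 0`
(nonzero polynomials with coefficients in `ℕ ∪ {0}` and zero constant term). -/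

/-- `A ⊆ ℕ⁺` is PP-rich in `(ℕ,+)` (`ℕ` the positive integers): for every nonempty finite
`R ⊆ ℙ_ℕ` there are positive `a, x` with `a + f(x) ∈ A` for every `f ∈ R`. -/
def PPRichN (A : Set ℕ) : Prop :=
  ∀ R : Finset (Polynomial ℕ), R.Nonempty → (∀ f ∈ R, f ≠ 0 ∧ f.coeff 0 = 0) →
    ∃ a : ℕ, 0 < a ∧ ∃ x : ℕ, 0 < x ∧ ∀ f ∈ R, a + Polynomial.eval x f ∈ A

def PPValid (R : Finset (Polynomial ℕ)) : Prop :=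
  R.Nonempty ∧ ∀ f ∈ R, f ≠ 0 ∧ f.coeff 0 = 0

instance : Countable (Polynomial ℕ) :=
  ((Polynomial.toFinsuppIso ℕ).toEquiv.trans AddMonoidAlgebra.coeffEquiv).countable_iff.mpr (inferInstanceAs (Countable (ℕ →₀ ℕ)))

lemma pp_exists_witness (A : Set ℕ) (hPP : PPRichN A) (R : Finset (Polynomial ℕ))
    (hR : R.Nonempty) (hv : ∀ f ∈ R, f ≠ 0 ∧ f.coeff 0 = 0) (N : ℕ) :
    ∃ a x : ℕ, N < a ∧ 0 < x ∧ ∀ f ∈ R, a + Polynomial.eval x f ∈ A := by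
  set g : Polynomial ℕ := Polynomial.C (N + 1) * Polynomial.X with hg
  set R' := R.image (fun f => g + f) with hR'
  have hne' : R'.Nonempty := hR.image _
  have hval' : ∀ f ∈ R', f ≠ 0 ∧ f.coeff 0 = 0 := by
    intro f hf
    obtain ⟨f₀, hf₀, rfl⟩ := Finset.mem_image.mp hf
    constructor
    · intro h0
      have h1 : (g + f₀).coeff 1 = 0 := by rw [h0]; simp
      have h2 : (g + f₀).coeff 1 = (N + 1) + f₀.coeff 1 := by simp [hg]
      omega
    · simp [hg, (hv f₀ hf₀).2]
  obtain ⟨a, ha, x, hx, hmem⟩ := hPP R' hne' hval'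
  refine ⟨a + (N + 1) * x, x, ?_, hx, ?_⟩
  · have : N + 1 ≤ (N + 1) * x := Nat.le_mul_of_pos_right _ hx
    omega
  · intro f hf
    have h3 := hmem (g + f) (Finset.mem_image_of_mem _ hf)
    have h4 : Polynomial.eval x (g + f) = (N + 1) * x + Polynomial.eval x f := by simp [hg]
    rw [h4] at h3
    rw [add_assoc]
    exact h3

noncomputable def ppPick (A : Set ℕ) (hPP : PPRichN A) (R : Finset (Polynomial ℕ)) (p : ℕ) :
    ℕ × ℕ :=
  if h : PPValid R then
    ⟨(pp_exists_witness A hPP R h.1 h.2 p).choose,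
     (pp_exists_witness A hPP R h.1 h.2 p).choose_spec.choose⟩
  else (p + 1, 1)

lemma ppPick_lt (A : Set ℕ) (hPP : PPRichN A) (R : Finset (Polynomial ℕ)) (p : ℕ) :
    p < (ppPick A hPP R p).1 := by
  unfold ppPick; split
  next h => exact (pp_exists_witness A hPP R h.1 h.2 p).choose_spec.choose_spec.1
  next => simp

lemma ppPick_pos (A : Set ℕ) (hPP : PPRichN A) (R : Finset (Polynomial ℕ)) (p : ℕ) :
    0 < (ppPick A hPP R p).2 := by
  unfold ppPick; split
  next h => exact (pp_exists_witness A hPP R h.1 h.2 p).choose_spec.choose_spec.2.1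
  next => simp

lemma ppPick_mem (A : Set ℕ) (hPP : PPRichN A) (R : Finset (Polynomial ℕ)) (p : ℕ)
    (h : PPValid R) :
    ∀ f ∈ R, (ppPick A hPP R p).1 + Polynomial.eval (ppPick A hPP R p).2 f ∈ A := by
  unfold ppPick; rw [dif_pos h]
  exact (pp_exists_witness A hPP R h.1 h.2 p).choose_spec.choose_spec.2.2

section Seq

variable (A : Set ℕ) (hPP : PPRichN A) (Rf : ℕ → Finset (Polynomial ℕ))

noncomputable def ppSeq : ℕ → ℕ × ℕ × ℕ
  | 0 =>
    ((ppPick A hPP (Rf 0) 1).1, (ppPick A hPP (Rf 0) 1).2,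
      (ppPick A hPP (Rf 0) 1).1 + ∑ f ∈ Rf 0, Polynomial.eval (ppPick A hPP (Rf 0) 1).2 f)
  | k + 1 =>
    ((ppPick A hPP (Rf (k + 1)) (ppSeq k).2.2).1,
      (ppPick A hPP (Rf (k + 1)) (ppSeq k).2.2).2,
      (ppPick A hPP (Rf (k + 1)) (ppSeq k).2.2).1 +
        ∑ f ∈ Rf (k + 1), Polynomial.eval (ppPick A hPP (Rf (k + 1)) (ppSeq k).2.2).2 f)

noncomputable def ppA (k : ℕ) : ℕ := (ppSeq A hPP Rf k).1
noncomputable def ppX (k : ℕ) : ℕ := (ppSeq A hPP Rf k).2.1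
noncomputable def ppB (k : ℕ) : ℕ := (ppSeq A hPP Rf k).2.2

noncomputable def ppPrev : ℕ → ℕ
  | 0 => 1
  | k + 1 => ppB A hPP Rf k

lemma ppA_eq (k : ℕ) : ppA A hPP Rf k = (ppPick A hPP (Rf k) (ppPrev A hPP Rf k)).1 := by
  cases k <;> rfl

lemma ppX_eq (k : ℕ) : ppX A hPP Rf k = (ppPick A hPP (Rf k) (ppPrev A hPP Rf k)).2 := by
  cases k <;> rfl

lemma ppB_eq (k : ℕ) :
    ppB A hPP Rf k = ppA A hPP Rf k + ∑ f ∈ Rf k, Polynomial.eval (ppX A hPP Rf k) f := by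
  cases k <;> rfl

lemma ppPrev_lt_A (k : ℕ) : ppPrev A hPP Rf k < ppA A hPP Rf k := by
  rw [ppA_eq]; exact ppPick_lt A hPP _ _

lemma ppX_pos (k : ℕ) : 0 < ppX A hPP Rf k := by
  rw [ppX_eq]; exact ppPick_pos A hPP _ _

lemma ppA_le_B (k : ℕ) : ppA A hPP Rf k ≤ ppB A hPP Rf k := by
  rw [ppB_eq]; exact Nat.le_add_right _ _

lemma ppB_le_prev {k l : ℕ} (h : k < l) : ppB A hPP Rf k ≤ ppPrev A hPP Rf l := by
  induction l with
  | zero => omega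
  | succ l ih =>
    rcases Nat.lt_succ_iff_lt_or_eq.mp h with h' | h'
    · calc ppB A hPP Rf k ≤ ppPrev A hPP Rf l := ih h'
        _ ≤ ppA A hPP Rf l := (ppPrev_lt_A A hPP Rf l).le
        _ ≤ ppB A hPP Rf l := ppA_le_B A hPP Rf l
        _ = ppPrev A hPP Rf (l + 1) := rfl
    · subst h'; rfl

noncomputable def ppS (k : ℕ) : Finset ℕ :=
  if PPValid (Rf k) then (Rf k).image (fun f => ppA A hPP Rf k + Polynomial.eval (ppX A hPP Rf k) f)
  else ∅

lemma ppS_bounds {k m : ℕ} (hm : m ∈ ppS A hPP Rf k) :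
    ppPrev A hPP Rf k < m ∧ m ≤ ppB A hPP Rf k := by
  unfold ppS at hm
  split at hm
  · obtain ⟨f, hf, rfl⟩ := Finset.mem_image.mp hm
    constructor
    · calc ppPrev A hPP Rf k < ppA A hPP Rf k := ppPrev_lt_A A hPP Rf k
        _ ≤ _ := Nat.le_add_right _ _
    · rw [ppB_eq]
      exact Nat.add_le_add_left (Finset.single_le_sum (fun i _ => Nat.zero_le _) hf) _
  · simp at hm

lemma ppS_unique {k l m : ℕ} (hk : m ∈ ppS A hPP Rf k) (hl : m ∈ ppS A hPP Rf l) : k = l := by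
  by_contra hne
  have key : ∀ k' l' : ℕ, k' < l' → m ∈ ppS A hPP Rf k' → m ∈ ppS A hPP Rf l' → False := by
    intro k' l' hlt h1 h2
    have b1 := (ppS_bounds A hPP Rf h1).2
    have b2 := (ppS_bounds A hPP Rf h2).1
    have := ppB_le_prev A hPP Rf hlt
    omega
  rcases Nat.lt_or_ge k l with h | h
  · exact key k l h hk hl
  · exact key l k (by omega) hl hk

lemma ppS_subset_A {k : ℕ} : ∀ m ∈ ppS A hPP Rf k, m ∈ A := by
  intro m hm
  unfold ppS at hm
  split at hm
  · obtain ⟨f, hf, rfl⟩ := Finset.mem_image.mp hm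
    rw [ppA_eq, ppX_eq]
    exact ppPick_mem A hPP _ _ (by assumption) f hf
  · simp at hm

lemma ppS_witness {k : ℕ} (h : PPValid (Rf k)) :
    ∀ f ∈ Rf k, ppA A hPP Rf k + Polynomial.eval (ppX A hPP Rf k) f ∈ ppS A hPP Rf k := by
  intro f hf
  unfold ppS
  rw [if_pos h]
  exact Finset.mem_image_of_mem _ hf

lemma ppS_nonempty {k : ℕ} (h : PPValid (Rf k)) : (ppS A hPP Rf k).Nonempty := by
  obtain ⟨f, hf⟩ := h.1
  exact ⟨_, ppS_witness A hPP Rf h f hf⟩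

lemma ppRich_of (T : Set ℕ)
    (hT : ∀ R, PPValid R → ∃ k, Rf k = R ∧ ↑(ppS A hPP Rf k) ⊆ T) : PPRichN T := by
  intro R hne hval
  obtain ⟨k, hk, hsub⟩ := hT R ⟨hne, hval⟩
  have hvalid : PPValid (Rf k) := hk ▸ ⟨hne, hval⟩
  refine ⟨ppA A hPP Rf k, ?_, ppX A hPP Rf k, ppX_pos A hPP Rf k, ?_⟩
  · have := ppPrev_lt_A A hPP Rf k
    omega
  · intro f hf
    exact hsub (ppS_witness A hPP Rf hvalid f (hk.symm ▸ hf))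

end Seq

/-- Let `A` be a PP-rich subset of `(ℕ,+)` (`ℕ` the positive integers).
Then (1) `A` contains a family of `2^ℵ₀` (indexed by `Set ℕ`) almost disjoint infinite
PP-rich subsets, and (2) `A` can be partitioned into countably infinitely many pairwise
disjoint PP-rich sets. -/
theorem stmt19 (A : Set ℕ) (hA : ∀ n ∈ A, 0 < n) (hPP : PPRichN A) :
    (∃ B : Set ℕ → Set ℕ,
      Function.Injective B ∧
      (∀ α, B α ⊆ A ∧ (B α).Infinite ∧ PPRichN (B α)) ∧
      (∀ α β, α ≠ β → (B α ∩ B β).Finite)) ∧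
    (∃ C : ℕ → Set ℕ, (⋃ n, C n) = A ∧
      (∀ m n : ℕ, m ≠ n → Disjoint (C m) (C n)) ∧
      ∀ n, PPRichN (C n)) := by
  classical
  obtain ⟨ρ, hρ⟩ : ∃ ρ : ℕ → Finset (Polynomial ℕ), Function.Surjective ρ :=
    exists_surjective_nat _
  constructor
  · -- Part (1)
    set Rf1 : ℕ → Finset (Polynomial ℕ) := fun k =>
      ρ (Nat.unpair ((Encodable.decode (α := Finset ℕ × ℕ) k).elim 0 Prod.snd)).2 with hRf1
    set seg : Set ℕ → ℕ → Finset ℕ := fun α m => (Finset.range m).filter (fun i => i ∈ α)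
      with hseg
    set enc1 : Set ℕ → ℕ → ℕ := fun α m => Encodable.encode ((seg α m, m) : Finset ℕ × ℕ)
      with henc1
    have hRf1enc : ∀ α m, Rf1 (enc1 α m) = ρ (Nat.unpair m).2 := by
      intro α m
      rw [hRf1, henc1]
      simp [Encodable.encodek]
    have hencinj : ∀ α β m m', enc1 α m = enc1 β m' → seg α m = seg β m' ∧ m = m' := by
      intro α β m m' h
      rw [henc1] at h
      have h2 := Encodable.encode_injective h
      exact ⟨congrArg Prod.fst h2, congrArg Prod.snd h2⟩
    set B : Set ℕ → Set ℕ := fun α => ⋃ m, ↑(ppS A hPP Rf1 (enc1 α m)) with hB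
    have hsubA : ∀ α, B α ⊆ A := by
      intro α
      rw [hB]
      exact Set.iUnion_subset fun m y hy => ppS_subset_A A hPP Rf1 _ hy
    have hrich : ∀ α, PPRichN (B α) := by
      intro α
      apply ppRich_of A hPP Rf1
      intro R hR
      obtain ⟨j, hj⟩ := hρ R
      refine ⟨enc1 α (Nat.pair 0 j), ?_, ?_⟩
      · rw [hRf1enc]; rw [Nat.unpair_pair]; exact hj
      · rw [hB]
        exact Set.subset_iUnion (fun m => ((ppS A hPP Rf1 (enc1 α m) : Finset ℕ) : Set ℕ))
          (Nat.pair 0 j)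
    have hXvalid : PPValid ({Polynomial.X} : Finset (Polynomial ℕ)) := by
      refine ⟨⟨_, Finset.mem_singleton_self _⟩, ?_⟩
      intro f hf
      rw [Finset.mem_singleton] at hf
      subst hf
      exact ⟨Polynomial.X_ne_zero, Polynomial.coeff_X_zero⟩
    obtain ⟨j₀, hj₀⟩ := hρ ({Polynomial.X} : Finset (Polynomial ℕ))
    have hinf : ∀ α, (B α).Infinite := by
      intro α
      have hvalid : ∀ t : ℕ, PPValid (Rf1 (enc1 α (Nat.pair t j₀))) := by
        intro t
        rw [hRf1enc, Nat.unpair_pair, hj₀]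
        exact hXvalid
      have hymem : ∀ t, (ppS_nonempty A hPP Rf1 (hvalid t)).choose
          ∈ ppS A hPP Rf1 (enc1 α (Nat.pair t j₀)) :=
        fun t => (ppS_nonempty A hPP Rf1 (hvalid t)).choose_spec
      apply Set.infinite_of_injective_forall_mem
        (f := fun t : ℕ => (ppS_nonempty A hPP Rf1 (hvalid t)).choose)
      · intro t t' h
        dsimp only at h
        have hmem2 := hymem t
        rw [h] at hmem2
        have h1 := ppS_unique A hPP Rf1 hmem2 (hymem t')
        have h2 := (hencinj _ _ _ _ h1).2
        have h3 := congrArg (fun z => (Nat.unpair z).1) h2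
        simpa [Nat.unpair_pair] using h3
      · intro t
        rw [hB]
        exact Set.mem_iUnion.mpr ⟨Nat.pair t j₀, hymem t⟩
    have hainf : ∀ α β, α ≠ β → (B α ∩ B β).Finite := by
      intro α β hne
      have hex : ∃ i₀, ¬(i₀ ∈ α ↔ i₀ ∈ β) := by
        by_contra h
        push_neg at h
        exact hne (Set.ext fun i => h i)
      obtain ⟨i₀, hi₀⟩ := hex
      apply Set.Finite.subset (Set.Finite.biUnion (Set.finite_Iic i₀)
        (fun m _ => (ppS A hPP Rf1 (enc1 α m)).finite_toSet))
      rintro y ⟨hy1, hy2⟩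
      rw [hB] at hy1 hy2
      obtain ⟨m, hm⟩ := Set.mem_iUnion.mp hy1
      obtain ⟨m', hm'⟩ := Set.mem_iUnion.mp hy2
      have hk := ppS_unique A hPP Rf1 hm hm'
      obtain ⟨hseg_eq, hmm⟩ := hencinj α β m m' hk
      subst hmm
      have hmle : m ≤ i₀ := by
        by_contra hgt
        push_neg at hgt
        have h1 : i₀ ∈ seg α m ↔ i₀ ∈ α := by
          rw [hseg]; simp [Finset.mem_filter, Finset.mem_range, hgt]
        have h2 : i₀ ∈ seg β m ↔ i₀ ∈ β := by
          rw [hseg]; simp [Finset.mem_filter, Finset.mem_range, hgt]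
        rw [hseg_eq] at h1
        exact hi₀ (h1.symm.trans h2)
      exact Set.mem_biUnion (Set.mem_Iic.mpr hmle) hm
    refine ⟨B, ?_, fun α => ⟨hsubA α, hinf α, hrich α⟩, hainf⟩
    intro α β h
    by_contra hne
    have hfin := hainf α β hne
    rw [h, Set.inter_self] at hfin
    exact (hinf β) hfin
  · -- Part (2)
    set Rf2 : ℕ → Finset (Polynomial ℕ) := fun k => ρ (Nat.unpair k).2 with hRf2
    set col : ℕ → ℕ := fun m =>
      if h : ∃ k, m ∈ ppS A hPP Rf2 k then (Nat.unpair (Nat.find h)).1 else 0 with hcol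
    set C : ℕ → Set ℕ := fun n => {m | m ∈ A ∧ col m = n} with hC
    refine ⟨C, ?_, ?_, ?_⟩
    · ext m
      rw [Set.mem_iUnion]
      constructor
      · rintro ⟨n, hm, _⟩
        exact hm
      · intro hm
        exact ⟨col m, hm, rfl⟩
    · intro m n hmn
      rw [Set.disjoint_left]
      rintro x ⟨_, hx2⟩ ⟨_, hy2⟩
      exact hmn (hx2.symm.trans hy2)
    · intro n
      apply ppRich_of A hPP Rf2
      intro R hR
      obtain ⟨j, hj⟩ := hρ R
      refine ⟨Nat.pair n j, ?_, ?_⟩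
      · rw [hRf2]; simp only [Nat.unpair_pair]; exact hj
      · intro m hm
        have hmS : m ∈ ppS A hPP Rf2 (Nat.pair n j) := hm
        have hmA : m ∈ A := ppS_subset_A A hPP Rf2 _ hmS
        have hex : ∃ k, m ∈ ppS A hPP Rf2 k := ⟨_, hmS⟩
        have hfind : Nat.find hex = Nat.pair n j :=
          ppS_unique A hPP Rf2 (Nat.find_spec hex) hmS
        refine ⟨hmA, ?_⟩
        rw [hcol]
        simp only []
        rw [dif_pos hex, hfind, Nat.unpair_pair]
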